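/- Let φ(v) = μ(v^α − n) + ν v^{−β} with μ > 0, ν ≥ 0, 1 < α, β ≥ 0. Then for s ≥ 1, sup_{v > t₀} φ'(v)/φ'(sv) = s^{1−α}, where t₀ ≥ 0 is defined by φ'(t₀) = 0 (t₀ = 0 if ν = 0). -/

import Mathlib

open Filter Set Topology

theorem stmt_14 (n : ℕ) (hn : 2 ≤ n) (μ ν α β : ℝ)
    (hμ : 0 < μ) (hν : 0 ≤ ν) (hα : 1 < α) (hβ : 0 ≤ β)
    (φ : ℝ → ℝ) (hφ : ∀ v > (0:ℝ), φ v = μ * (v ^ α - n) + ν * v ^ (-β))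
    (t₀ : ℝ) (ht₀ : 0 ≤ t₀)
    (ht₀pos : ∀ v > t₀, 0 < deriv φ v)
    (ht₀zero : t₀ = 0 ∨ deriv φ t₀ = 0)
    (s : ℝ) (hs : 1 ≤ s) :
    sSup {r : ℝ | ∃ v > t₀, r = deriv φ v / deriv φ (s * v)} = s ^ (1 - α) := by
  have hspos : (0:ℝ) < s := lt_of_lt_of_le one_pos hs
  -- derivative formula
  have hderiv : ∀ v > (0:ℝ), deriv φ v = μ * α * v ^ (α - 1) - ν * β * v ^ (-β - 1) := by
    intro v hv
    have heq : φ =ᶠ[nhds v] fun x => μ * (x ^ α - n) + ν * x ^ (-β) := by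
      filter_upwards [Ioi_mem_nhds hv] with x hx using hφ x hx
    have h1 : HasDerivAt (fun x : ℝ => x ^ α) (α * v ^ (α - 1)) v :=
      Real.hasDerivAt_rpow_const (Or.inl hv.ne')
    have h2 : HasDerivAt (fun x : ℝ => x ^ (-β)) (-β * v ^ (-β - 1)) v :=
      Real.hasDerivAt_rpow_const (Or.inl hv.ne')
    have hHas : HasDerivAt (fun x : ℝ => μ * (x ^ α - n) + ν * x ^ (-β))
        (μ * α * v ^ (α - 1) - ν * β * v ^ (-β - 1)) v := by
      have := ((h1.sub_const (n:ℝ)).const_mul μ).add (h2.const_mul ν)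
      exact this.congr_deriv (by ring)
    rw [heq.deriv_eq, hHas.deriv]
  have hsv : ∀ v, t₀ < v → t₀ < s * v := by
    intro v hv
    have hv0 : 0 < v := lt_of_le_of_lt ht₀ hv
    nlinarith
  -- set nonempty
  have hne : {r : ℝ | ∃ v > t₀, r = deriv φ v / deriv φ (s * v)}.Nonempty :=
    ⟨_, t₀ + 1, by linarith, rfl⟩
  -- upper bound
  have hub : ∀ r ∈ {r : ℝ | ∃ v > t₀, r = deriv φ v / deriv φ (s * v)}, r ≤ s ^ (1 - α) := by
    rintro r ⟨v, hv, rfl⟩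
    have hv0 : 0 < v := lt_of_le_of_lt ht₀ hv
    have hsv0 : 0 < s * v := mul_pos hspos hv0
    have hgsv : 0 < deriv φ (s * v) := ht₀pos _ (hsv v hv)
    rw [div_le_iff₀ hgsv]
    rw [hderiv v hv0, hderiv (s * v) hsv0]
    rw [Real.mul_rpow hspos.le hv0.le, Real.mul_rpow hspos.le hv0.le]
    have e1 : s ^ (1 - α) * (s ^ (α - 1)) = 1 := by
      rw [← Real.rpow_add hspos]; norm_num
    have e2 : s ^ (1 - α) * (s ^ (-β - 1)) = s ^ (-β - α) := by
      rw [← Real.rpow_add hspos]; ring_nf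
    have e3 : s ^ (-β - α) ≤ 1 := by
      apply Real.rpow_le_one_of_one_le_of_nonpos hs; linarith
    have h4 : 0 ≤ ν * β * v ^ (-β - 1) := by positivity
    have e4 : s ^ (-β - α) * (ν * β * v ^ (-β - 1)) ≤ ν * β * v ^ (-β - 1) :=
      mul_le_of_le_one_left h4 e3
    have expand : s ^ (1 - α) * (μ * α * (s ^ (α - 1) * v ^ (α - 1)) - ν * β * (s ^ (-β - 1) * v ^ (-β - 1)))
        = (s ^ (1 - α) * s ^ (α - 1)) * (μ * α * v ^ (α - 1))
          - (s ^ (1 - α) * s ^ (-β - 1)) * (ν * β * v ^ (-β - 1)) := by ring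
    rw [expand, e1, e2]
    linarith
  -- tendsto: ratio → s^(1-α)
  have hC : Tendsto (fun v : ℝ => v ^ (-β - α)) atTop (nhds 0) := by
    have : -β - α = -(β + α) := by ring
    rw [this]
    exact tendsto_rpow_neg_atTop (by linarith)
  have hnum : Tendsto (fun v : ℝ => μ * α - ν * β * v ^ (-β - α)) atTop (nhds (μ * α)) := by
    have := (tendsto_const_nhds (x := ν * β) (f := atTop (α := ℝ))).mul hC
    simpa using (tendsto_const_nhds (x := μ * α)).sub this
  have hden : Tendsto (fun v : ℝ => μ * α * s ^ (α - 1) - ν * β * s ^ (-β - 1) * v ^ (-β - α))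
      atTop (nhds (μ * α * s ^ (α - 1))) := by
    have := (tendsto_const_nhds (x := ν * β * s ^ (-β - 1)) (f := atTop (α := ℝ))).mul hC
    simpa using (tendsto_const_nhds (x := μ * α * s ^ (α - 1))).sub this
  have hdenne : μ * α * s ^ (α - 1) ≠ 0 := by
    have := Real.rpow_pos_of_pos hspos (α - 1); positivity
  have hlim0 : Tendsto (fun v : ℝ =>
      (μ * α - ν * β * v ^ (-β - α)) / (μ * α * s ^ (α - 1) - ν * β * s ^ (-β - 1) * v ^ (-β - α)))
      atTop (nhds (s ^ (1 - α))) := by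
    have := hnum.div hden hdenne
    have hval : μ * α / (μ * α * s ^ (α - 1)) = s ^ (1 - α) := by
      have h6 : s ^ (1 - α) = (s ^ (α - 1))⁻¹ := by
        rw [← Real.rpow_neg hspos.le]; ring_nf
      rw [h6, show μ * α / (μ * α * s ^ (α - 1)) = μ * α * 1 / (μ * α * s ^ (α - 1)) by ring,
        mul_div_mul_left _ _ (by positivity : (μ * α) ≠ 0), one_div]
    rwa [hval] at this
  have heqv : (fun v => deriv φ v / deriv φ (s * v)) =ᶠ[(atTop : Filter ℝ)] fun v =>
      (μ * α - ν * β * v ^ (-β - α)) / (μ * α * s ^ (α - 1) - ν * β * s ^ (-β - 1) * v ^ (-β - α)) := by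
    filter_upwards [eventually_gt_atTop t₀, eventually_gt_atTop (0:ℝ)] with v hv hv0
    have hsv0 : 0 < s * v := mul_pos hspos hv0
    have hva : (0:ℝ) < v ^ (α - 1) := Real.rpow_pos_of_pos hv0 _
    have key1 : v ^ (-β - 1) = v ^ (α - 1) * v ^ (-β - α) := by
      rw [← Real.rpow_add hv0]; ring_nf
    have key2 : (s * v) ^ (α - 1) = s ^ (α - 1) * v ^ (α - 1) :=
      Real.mul_rpow hspos.le hv0.le
    have key3 : (s * v) ^ (-β - 1) = s ^ (-β - 1) * (v ^ (α - 1) * v ^ (-β - α)) := by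
      rw [Real.mul_rpow hspos.le hv0.le, key1]
    rw [hderiv v hv0, hderiv (s * v) hsv0, key1, key2, key3]
    rw [show μ * α * v ^ (α - 1) - ν * β * (v ^ (α - 1) * v ^ (-β - α))
        = v ^ (α - 1) * (μ * α - ν * β * v ^ (-β - α)) by ring,
      show μ * α * (s ^ (α - 1) * v ^ (α - 1)) - ν * β * (s ^ (-β - 1) * (v ^ (α - 1) * v ^ (-β - α)))
        = v ^ (α - 1) * (μ * α * s ^ (α - 1) - ν * β * s ^ (-β - 1) * v ^ (-β - α)) by ring]
    rw [mul_div_mul_left _ _ hva.ne']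
  have hlim : Tendsto (fun v : ℝ => deriv φ v / deriv φ (s * v)) atTop (nhds (s ^ (1 - α))) :=
    hlim0.congr' heqv.symm
  -- least upper bound
  refine IsLUB.csSup_eq ⟨hub, ?_⟩ hne
  intro b hb
  refine le_of_tendsto hlim ?_
  filter_upwards [eventually_gt_atTop t₀] with v hv
  exact hb ⟨v, hv, rfl⟩
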